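/- arXiv:1610.03132 — 3 statements merged into one kernel-verified Lean document; each statement's English description precedes it below -/
import Mathlib

section
/- For all integers g ≥ 3, the sum ∑_{i=1}^{g} (log(2g-2i+2))^{8/5} is strictly greater than (2/π)·g·log(2g). -/
open Real Finset

/-- `a ≤ b ^ (p/q)` follows from `a ^ q ≤ b ^ p` for nonnegatives. -/
lemma le_rpow_div_of_pow_le {a b : ℝ} (ha : 0 ≤ a) (hb : 0 ≤ b) (p q : ℕ)
    (hq : 0 < q) (h : a ^ q ≤ b ^ p) : a ≤ b ^ ((p : ℝ) / q) := by
  have hbp : 0 ≤ b ^ ((p : ℝ) / q) := Real.rpow_nonneg hb _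
  have h2 : (b ^ ((p : ℝ) / q)) ^ q = b ^ p := by
    rw [← Real.rpow_natCast (b ^ ((p : ℝ) / q)) q, ← Real.rpow_mul hb,
      div_mul_cancel₀, Real.rpow_natCast]
    exact_mod_cast hq.ne'
  exact le_of_pow_le_pow_left₀ hq.ne' hbp (h.trans h2.ge)

lemma rpow_85_ge {y : ℝ} (hy : 1.3862 ≤ y) : 1.21 * y ≤ y ^ ((8 : ℝ) / 5) := by
  have hy0 : (0 : ℝ) < y := by linarith
  have h85 : (8 : ℝ) / 5 = 3 / 5 + 1 := by norm_num
  rw [h85, Real.rpow_add hy0, Real.rpow_one]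
  have h1 : (1.21 : ℝ) ≤ y ^ ((3 : ℝ) / 5) := by
    have hp : (1.3862 : ℝ) ^ 3 ≤ y ^ 3 :=
      pow_le_pow_left₀ (by norm_num) hy 3
    have : (1.21 : ℝ) ^ 5 ≤ y ^ 3 := by nlinarith
    have := le_rpow_div_of_pow_le (by norm_num) hy0.le 3 5 (by norm_num) this
    simpa using this
  nlinarith

/-- Stirling-type lower bound for the log-factorial. -/
lemma sum_log_ge (g : ℕ) (hg : 1 ≤ g) :
    (g : ℝ) * Real.log g - g + 1 ≤ ∑ j ∈ Finset.Icc 1 g, Real.log j := by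
  induction g, hg using Nat.le_induction with
  | base => simp
  | succ n hn ih =>
    rw [Finset.sum_Icc_succ_top (by omega)]
    have hn0 : (0 : ℝ) < n := by exact_mod_cast hn
    have hstep : Real.log ((n : ℝ) + 1) - Real.log n ≤ 1 / n := by
      rw [← Real.log_div (by positivity) hn0.ne']
      have := Real.log_le_sub_one_of_pos (x := ((n : ℝ) + 1) / n) (by positivity)
      have h2 : ((n : ℝ) + 1) / n - 1 = 1 / n := by field_simp; ring
      linarith
    have hmul : (n : ℝ) * Real.log ((n:ℝ)+1) ≤ (n : ℝ) * Real.log n + 1 := by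
      have h := mul_le_mul_of_nonneg_left hstep hn0.le
      have h1 : (n:ℝ) * (1/n) = 1 := by field_simp
      nlinarith
    have hexp : ((n:ℝ)+1) * Real.log ((n:ℝ)+1)
        = (n:ℝ) * Real.log ((n:ℝ)+1) + Real.log ((n:ℝ)+1) := by ring
    push_cast
    linarith [ih, hmul, hexp]

set_option maxHeartbeats 1000000 in
theorem sum_log_rpow_gt (g : ℕ) (hg : 3 ≤ g) :
    (2 / Real.pi) * g * Real.log (2 * g) <
      ∑ i ∈ Finset.Icc 1 g, (Real.log (2 * (g : ℝ) - 2 * i + 2)) ^ ((8 : ℝ) / 5) := by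
  have hg0 : (0 : ℝ) < g := by positivity
  have hl2a : (0.6931 : ℝ) ≤ Real.log 2 := by have := Real.log_two_gt_d9; linarith
  have hl2b : Real.log 2 ≤ 0.6932 := by have := Real.log_two_lt_d9; linarith
  -- Step 1: reindex the sum via j = g + 1 - i
  have hre : ∑ i ∈ Finset.Icc 1 g, (Real.log (2 * (g : ℝ) - 2 * i + 2)) ^ ((8 : ℝ) / 5)
      = ∑ j ∈ Finset.Icc 1 g, (Real.log (2 * (j : ℝ))) ^ ((8 : ℝ) / 5) := by
    refine Finset.sum_nbij' (fun i => g + 1 - i) (fun j => g + 1 - j) ?_ ?_ ?_ ?_ ?_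
    · intro a ha; simp only [Finset.mem_Icc] at *; omega
    · intro a ha; simp only [Finset.mem_Icc] at *; omega
    · intro a ha; simp only [Finset.mem_Icc] at *; omega
    · intro a ha; simp only [Finset.mem_Icc] at *; omega
    · intro a ha
      simp only [Finset.mem_Icc] at ha
      congr 2
      have h1 : ((g + 1 - a : ℕ) : ℝ) = (g : ℝ) + 1 - a := by
        have ha1 : a ≤ g + 1 := by omega
        push_cast [Nat.cast_sub ha1]
        ring
      rw [h1]; ring
  rw [hre]
  -- Step 2: split off the j = 1 term
  have hsplit : Finset.Icc 1 g = insert 1 (Finset.Icc 2 g) := by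
    ext x; simp only [Finset.mem_Icc, Finset.mem_insert]; omega
  rw [hsplit, Finset.sum_insert (by simp)]
  simp only [Nat.cast_one, mul_one]
  -- the j = 1 term is ≥ 0.5
  have hterm1 : (0.5 : ℝ) ≤ (Real.log 2) ^ ((8 : ℝ) / 5) := by
    refine le_rpow_div_of_pow_le (by norm_num) (by linarith) 8 5 (by norm_num) ?_
    have hp : (0.6931 : ℝ) ^ 8 ≤ (Real.log 2) ^ 8 :=
      pow_le_pow_left₀ (by norm_num) hl2a 8
    nlinarith
  -- Step 3: bound the remaining terms
  have hterms : ∀ j ∈ Finset.Icc 2 g, 1.21 * Real.log (2 * (j : ℝ))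
      ≤ (Real.log (2 * (j : ℝ))) ^ ((8 : ℝ) / 5) := by
    intro j hj
    simp only [Finset.mem_Icc] at hj
    have hj2 : (2 : ℝ) ≤ j := by exact_mod_cast hj.1
    have h4 : (1.3862 : ℝ) ≤ Real.log (2 * (j : ℝ)) := by
      have h1 : Real.log 4 ≤ Real.log (2 * (j : ℝ)) :=
        Real.log_le_log (by norm_num) (by linarith)
      have h2 : Real.log 4 = 2 * Real.log 2 := by
        rw [show (4:ℝ) = 2^2 by norm_num, Real.log_pow]; push_cast; ring
      linarith
    exact rpow_85_ge h4
  have hsum2 : 1.21 * ∑ j ∈ Finset.Icc 2 g, Real.log (2 * (j : ℝ))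
      ≤ ∑ j ∈ Finset.Icc 2 g, (Real.log (2 * (j : ℝ))) ^ ((8 : ℝ) / 5) := by
    rw [Finset.mul_sum]
    exact Finset.sum_le_sum hterms
  -- Step 4: lower bound for ∑_{j=2}^g log(2j)
  have hlogsum : (g : ℝ) * Real.log g - g + 1 + ((g : ℝ) - 1) * Real.log 2
      ≤ ∑ j ∈ Finset.Icc 2 g, Real.log (2 * (j : ℝ)) := by
    have hterm : ∀ j ∈ Finset.Icc 2 g, Real.log (2 * (j : ℝ)) = Real.log 2 + Real.log j := by
      intro j hj
      simp only [Finset.mem_Icc] at hj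
      have : (0 : ℝ) < j := by
        have : 0 < j := by omega
        exact_mod_cast this
      rw [Real.log_mul (by norm_num) this.ne']
    rw [Finset.sum_congr rfl hterm, Finset.sum_add_distrib, Finset.sum_const, Nat.card_Icc,
      nsmul_eq_mul]
    have hcard : ((g + 1 - 2 : ℕ) : ℝ) = (g : ℝ) - 1 := by
      have h2 : (2 : ℕ) ≤ g + 1 := by omega
      push_cast [Nat.cast_sub h2]
      have h1g : (1:ℕ) ≤ g := by omega
      push_cast [Nat.cast_sub h1g]
      ring
    rw [hcard]
    have heq2 : ∑ j ∈ Finset.Icc 2 g, Real.log (j : ℝ)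
        = ∑ j ∈ Finset.Icc 1 g, Real.log (j : ℝ) := by
      rw [hsplit, Finset.sum_insert (by simp)]
      simp
    rw [heq2]
    have := sum_log_ge g (by omega)
    linarith
  -- Step 5: numeric finish
  have hlog2g : Real.log (2 * (g : ℝ)) = Real.log 2 + Real.log g :=
    Real.log_mul (by norm_num) hg0.ne'
  set L := Real.log (2 * (g : ℝ)) with hL
  have hpi : (3.141592 : ℝ) < Real.pi := by have := Real.pi_gt_d6; linarith
  have hpi0 : (0 : ℝ) < Real.pi := Real.pi_pos
  have hfrac : (2 : ℝ) / Real.pi ≤ 0.6367 := by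
    rw [div_le_iff₀ hpi0]; nlinarith
  have hgL : (g : ℝ) * L = (g : ℝ) * Real.log 2 + (g : ℝ) * Real.log g := by
    rw [hlog2g]; ring
  -- key numeric inequality : 0.6367 g L < 0.5 + 1.21 (gL - log2 - g + 1)
  have key : (0.6367 : ℝ) * ((g : ℝ) * L) < 0.5 + 1.21 * ((g : ℝ) * L - Real.log 2 - g + 1) := by
    rcases lt_or_ge g 5 with h5 | h5
    · interval_cases g
      · -- g = 3 : L = log 6 ≥ 1.7195
        have hlog32 : (1/3 : ℝ) ≤ Real.log ((3:ℝ)/2) := by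
          have h := Real.log_le_sub_one_of_pos (x := (2:ℝ)/3) (by norm_num)
          have h23 : Real.log ((2:ℝ)/3) = - Real.log ((3:ℝ)/2) := by
            rw [← Real.log_inv]; norm_num
          rw [h23] at h; linarith
        have hL6 : (1.7195 : ℝ) ≤ L := by
          have hLe : L = Real.log 2 + Real.log 2 + Real.log ((3:ℝ)/2) := by
            rw [hL, show (2 * ((3:ℕ):ℝ)) = 2 * (2 * ((3:ℝ)/2)) by push_cast; ring,
              Real.log_mul (by norm_num) (by norm_num),
              Real.log_mul (by norm_num) (by norm_num)]
            ring
          rw [hLe]; linarith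
        push_cast
        nlinarith
      · -- g = 4 : L = log 8 = 3 log 2 ≥ 2.0793
        have hL8 : (2.0793 : ℝ) ≤ L := by
          have hLe : L = 3 * Real.log 2 := by
            rw [hL, show (2 * ((4:ℕ):ℝ)) = 2^3 by push_cast; norm_num, Real.log_pow]
            push_cast; ring
          rw [hLe]; linarith
        push_cast
        nlinarith
    · -- g ≥ 5 : L ≥ log 10 ≥ 2.2793
      have hg5 : (5 : ℝ) ≤ g := by exact_mod_cast h5
      have hL10 : (2.2793 : ℝ) ≤ L := by
        have h1 : Real.log 10 ≤ L := Real.log_le_log (by norm_num) (by linarith)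
        have h54 : (0.2 : ℝ) ≤ Real.log ((5:ℝ)/4) := by
          have h := Real.log_le_sub_one_of_pos (x := (4:ℝ)/5) (by norm_num)
          have h45 : Real.log ((4:ℝ)/5) = - Real.log ((5:ℝ)/4) := by
            rw [← Real.log_inv]; norm_num
          rw [h45] at h; linarith
        have h10 : Real.log 10 = 3 * Real.log 2 + Real.log ((5:ℝ)/4) := by
          rw [show (10:ℝ) = 2^3 * ((5:ℝ)/4) by norm_num,
            Real.log_mul (by norm_num) (by norm_num), Real.log_pow]
          push_cast; ring
        linarith
      have hmono : (g : ℝ) * 2.2793 ≤ (g : ℝ) * L :=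
        mul_le_mul_of_nonneg_left hL10 hg0.le
      linarith
  have hLpos : 0 < L := by
    rw [hL]
    apply Real.log_pos
    have hg3 : (3:ℝ) ≤ g := by exact_mod_cast hg
    linarith
  have hfinal : (2 / Real.pi) * g * L ≤ 0.6367 * ((g : ℝ) * L) := by
    have h1 : (2 / Real.pi) * g ≤ 0.6367 * g :=
      mul_le_mul_of_nonneg_right hfrac hg0.le
    have h2 := mul_le_mul_of_nonneg_right h1 hLpos.le
    linarith
  -- now combine everything
  have hS : (g : ℝ) * L - Real.log 2 - g + 1
      ≤ ∑ j ∈ Finset.Icc 2 g, Real.log (2 * (j : ℝ)) := by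
    have : (g : ℝ) * L - Real.log 2 - g + 1
        = (g : ℝ) * Real.log g - g + 1 + ((g : ℝ) - 1) * Real.log 2 := by
      rw [hgL]; ring
    rw [this]; exact hlogsum
  calc (2 / Real.pi) * g * L ≤ 0.6367 * ((g : ℝ) * L) := hfinal
    _ < 0.5 + 1.21 * ((g : ℝ) * L - Real.log 2 - g + 1) := key
    _ ≤ 0.5 + 1.21 * ∑ j ∈ Finset.Icc 2 g, Real.log (2 * (j : ℝ)) := by linarith
    _ ≤ (Real.log 2) ^ ((8 : ℝ) / 5)
        + ∑ j ∈ Finset.Icc 2 g, (Real.log (2 * (j : ℝ))) ^ ((8 : ℝ) / 5) := by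
        linarith
end

section
/- In a right-angled hyperbolic hexagon with consecutive side lengths a, b, c, d, e, f (all positive reals) satisfying the standard hexagon relation sinh(e)·sinh(b/2) = cosh(a) [with b/2 the relevant half-side], one has e ≤ a + arcsinh(3/b). -/
theorem hexagon_seam_bound (a b e : ℝ) (ha : 0 < a) (hb : 0 < b) (he : 0 < e)
    (hhex : Real.sinh e * Real.sinh (b / 2) = Real.cosh a) :
    e ≤ a + Real.arsinh (3 / b) := by
  have hsb : b / 2 ≤ Real.sinh (b / 2) := Real.self_le_sinh_iff.mpr (by linarith)
  have hsa : 0 < Real.sinh a := Real.sinh_pos_iff.mpr ha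
  have hse : 0 < Real.sinh e := Real.sinh_pos_iff.mpr he
  have hcosh : 1 ≤ Real.cosh (Real.arsinh (3 / b)) := Real.one_le_cosh _
  have h1 : Real.sinh e * b ≤ Real.cosh a * 3 := by nlinarith
  have h2 : Real.sinh e ≤ Real.cosh a * (3 / b) := by
    rw [mul_div_assoc', le_div_iff₀ hb]; linarith
  rw [← Real.sinh_le_sinh, Real.sinh_add, Real.sinh_arsinh]
  nlinarith [mul_le_mul_of_nonneg_left hcosh hsa.le]
end

section
/- Let a, b, e > 0 be real numbers satisfying sinh(e)·sinh(b/2) = cosh(a). If additionally a·b ≥ κ·log(2g) for some κ > 1 and some real g ≥ 3, then a/e ≥ a/(a + arcsinh(1/b)), and this lower bound tends to 1 as κ → ∞ uniformly in a, b subject to the constraint. -/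
open Real

lemma aux_log_six : (16:ℝ)/9 ≤ Real.log 6 := by
  rw [Real.le_log_iff_exp_le (by norm_num : (0:ℝ) < 6)]
  have h1 : Real.exp 1 < 2.7182818286 := Real.exp_one_lt_d9
  have h16 : Real.exp 16 < 6 ^ (9:ℕ) := by
    have he : Real.exp 16 = Real.exp 1 ^ (16:ℕ) := by
      rw [← Real.exp_nat_mul]; norm_num
    rw [he]
    calc Real.exp 1 ^ (16:ℕ) < 2.7182818286 ^ (16:ℕ) := by
          exact pow_lt_pow_left₀ h1 (Real.exp_pos 1).le (by norm_num)
      _ < 6 ^ (9:ℕ) := by norm_num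
  have h9 : Real.exp (16/9) ^ (9:ℕ) = Real.exp 16 := by
    rw [← Real.exp_nat_mul]; norm_num
  exact le_of_pow_le_pow_left₀ (by norm_num : (9:ℕ) ≠ 0) (by norm_num : (0:ℝ) ≤ 6)
    (by rw [h9]; exact h16.le)

lemma aux_exp_neg_one : Real.exp (-1:ℝ) ≤ 0.368 := by
  have h2 : 2.7182818283 < Real.exp 1 := Real.exp_one_gt_d9
  have hmul : Real.exp (-1:ℝ) * Real.exp 1 = 1 := by
    rw [← Real.exp_add]; norm_num
  nlinarith [Real.exp_pos (-1:ℝ), hmul, h2]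

lemma aux_sinh_lb {t : ℝ} (h0 : 0 ≤ t) (h1 : t ≤ 1) :
    t + t^3/6 - 5*t^4/192 ≤ Real.sinh t := by
  have hsum : (1:ℝ) + t + t^2/2 + t^3/6 ≤ Real.exp t := by
    have := Real.sum_le_exp_of_nonneg h0 4
    simp [Finset.sum_range_succ, Nat.factorial] at this
    nlinarith [this]
  have hb := Real.exp_bound (x := -t) (by rwa [abs_neg, abs_of_nonneg h0]) (n := 4) (by norm_num)
  rw [abs_neg, abs_of_nonneg h0] at hb
  have hsum4 : ∑ m ∈ Finset.range 4, (-t) ^ m / (m.factorial : ℝ)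
      = 1 - t + t^2/2 - t^3/6 := by
    simp [Finset.sum_range_succ, Nat.factorial]
    ring
  rw [hsum4] at hb
  have hub : Real.exp (-t) ≤ 1 - t + t^2/2 - t^3/6 + t^4 * (5/96) := by
    have h2 := abs_sub_le_iff.mp hb
    have h5 : ((4:ℕ).succ : ℝ) / ((4:ℕ).factorial * 4) = 5/96 := by norm_num [Nat.factorial]
    nlinarith [h2.1, h2.2]
  rw [Real.sinh_eq]
  nlinarith [hsum, hub]

lemma aux_tanh_lb (a : ℝ) :
    (1 - 2 * Real.exp (-(2*a))) * Real.cosh a ≤ Real.sinh a := by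
  have h1 : Real.exp (-(2*a)) * Real.exp a = Real.exp (-a) := by
    rw [← Real.exp_add]; ring_nf
  have h2 : Real.exp (-(2*a)) * Real.exp (-a) = Real.exp (-(3*a)) := by
    rw [← Real.exp_add]; ring_nf
  have h3 := Real.exp_pos (-(3*a))
  rw [Real.sinh_eq, Real.cosh_eq]
  nlinarith [h1, h2, h3]

set_option maxHeartbeats 2000000 in
lemma aux_main {a b : ℝ} (ha : 0 < a) (hb : 0 < b) (hab : 16/9 ≤ a*b) :
    b * Real.cosh a ≤
      Real.sinh (b/2) * (Real.sinh a * Real.sqrt (b^2+1) + Real.cosh a) := by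
  have hC : 0 < Real.cosh a := Real.cosh_pos (x := a)
  have hs : 0 ≤ Real.sinh a := Real.sinh_nonneg_iff.mpr ha.le
  have hS2 : b/2 ≤ Real.sinh (b/2) := Real.self_le_sinh_iff.mpr (by linarith)
  have hSpos : 0 < Real.sinh (b/2) := Real.sinh_pos_iff.mpr (by linarith)
  have hRb : b ≤ Real.sqrt (b^2+1) := Real.le_sqrt_of_sq_le (by nlinarith)
  have hR0 : 0 ≤ Real.sqrt (b^2+1) := Real.sqrt_nonneg _
  have hx0 : 0 ≤ Real.sinh a * Real.sqrt (b^2+1) + Real.cosh a :=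
    add_nonneg (mul_nonneg hs hR0) hC.le
  rcases le_or_gt a 1 with ha1 | ha1
  · -- case a ≤ 1 : cosh a ≤ b sinh a
    have hsa : a ≤ Real.sinh a := Real.self_le_sinh_iff.mpr ha.le
    have hcosh1 : Real.cosh a ≤ Real.cosh 1 := by
      rw [Real.cosh_le_cosh, abs_of_nonneg ha.le, abs_one]; exact ha1
    have hc1 : Real.cosh 1 ≤ 16/9 := by
      rw [Real.cosh_eq]
      have h1 : Real.exp 1 < 2.7182818286 := Real.exp_one_lt_d9
      have h5 := aux_exp_neg_one
      norm_num at h5 ⊢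
      nlinarith [h1, h5]
    have hkey : Real.cosh a ≤ b * Real.sinh a := by
      calc Real.cosh a ≤ 16/9 := hcosh1.trans hc1
        _ ≤ a * b := hab
        _ ≤ Real.sinh a * b := by nlinarith
        _ = b * Real.sinh a := by ring
    have h1 : Real.sinh a * b ≤ Real.sinh a * Real.sqrt (b^2+1) :=
      mul_le_mul_of_nonneg_left hRb hs
    calc b * Real.cosh a = (b/2) * (Real.cosh a + Real.cosh a) := by ring
      _ ≤ (b/2) * (Real.sinh a * b + Real.cosh a) := by nlinarith [hkey]
      _ ≤ (b/2) * (Real.sinh a * Real.sqrt (b^2+1) + Real.cosh a) := by nlinarith [h1, hb]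
      _ ≤ Real.sinh (b/2) * (Real.sinh a * Real.sqrt (b^2+1) + Real.cosh a) :=
          mul_le_mul_of_nonneg_right hS2 hx0
  · rcases le_or_gt 1 b with hb1 | hb1
    · -- case a ≥ 1, b ≥ 1
      have hsinh1 : (1:ℝ) ≤ Real.sinh 1 := by
        rw [Real.sinh_eq]
        have h2 : 2.7182818283 < Real.exp 1 := Real.exp_one_gt_d9
        have h5 := aux_exp_neg_one
        norm_num at h5 ⊢
        nlinarith [h2, h5]
      have hsa : (1:ℝ) ≤ Real.sinh a :=
        hsinh1.trans (Real.sinh_le_sinh.mpr ha1.le)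
      have hRs : Real.sqrt 2 ≤ Real.sqrt (b^2+1) :=
        Real.sqrt_le_sqrt (by nlinarith)
      have hsq2 : Real.sqrt 2 ^ 2 = 2 := Real.sq_sqrt (by norm_num)
      have hsq2pos : 0 < Real.sqrt 2 := Real.sqrt_pos.mpr (by norm_num)
      have hpos2 : 0 < Real.cosh a + Real.sqrt 2 * Real.sinh a := by
        nlinarith [mul_nonneg hsq2pos.le hs]
      have hcs : Real.cosh a ≤ Real.sqrt 2 * Real.sinh a := by
        nlinarith [Real.cosh_sq a, hsq2, hpos2, sq_nonneg (Real.sinh a - 1), hsa]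
      have hR : Real.cosh a ≤ Real.sinh a * Real.sqrt (b^2+1) := by
        calc Real.cosh a ≤ Real.sqrt 2 * Real.sinh a := hcs
          _ ≤ Real.sqrt (b^2+1) * Real.sinh a :=
              mul_le_mul_of_nonneg_right hRs (by linarith)
          _ = Real.sinh a * Real.sqrt (b^2+1) := by ring
      calc b * Real.cosh a = (b/2) * (Real.cosh a + Real.cosh a) := by ring
        _ ≤ (b/2) * (Real.sinh a * Real.sqrt (b^2+1) + Real.cosh a) := by nlinarith [hR, hb]
        _ ≤ Real.sinh (b/2) * (Real.sinh a * Real.sqrt (b^2+1) + Real.cosh a) :=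
            mul_le_mul_of_nonneg_right hS2 hx0
    · -- case a ≥ 1, b ≤ 1
      have hble : b ≤ 1 := hb1.le
      have hb2le : b^2 ≤ 1 := by nlinarith
      have hσ : b/2 + (b/2)^3/6 - 5*(b/2)^4/192 ≤ Real.sinh (b/2) :=
        aux_sinh_lb (by linarith) (by linarith)
      have hR : 1 + 3*b^2/8 ≤ Real.sqrt (b^2+1) := by
        rw [Real.le_sqrt (by positivity) (by positivity)]
        nlinarith [hb2le, sq_nonneg b]
      have hE : Real.exp (-(2*a)) ≤ 81*b^2/512 := by
        have hq : 1 + 2*a + (2*a)^2/2 ≤ Real.exp (2*a) := by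
          have h := Real.sum_le_exp_of_nonneg (by linarith : (0:ℝ) ≤ 2*a) 3
          have hsum3 : ∑ i ∈ Finset.range 3, (2*a) ^ i / (i.factorial : ℝ)
              = 1 + 2*a + (2*a)^2/2 := by
            norm_num [Finset.sum_range_succ, Nat.factorial]
          linarith [hsum3 ▸ h]
        have hq2 : 2*a^2 ≤ Real.exp (2*a) := by nlinarith [hq]
        have h2 : 512 ≤ 81*b^2 * Real.exp (2*a) := by
          have hbb : (0:ℝ) ≤ 81*b^2 := by positivity
          have h3 := mul_le_mul_of_nonneg_left hq2 hbb
          nlinarith [h3, sq_nonneg (a*b - 16/9), hab]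
        have h2' : 0 < Real.exp (2*a) := Real.exp_pos _
        rw [Real.exp_neg]
        nlinarith [inv_mul_cancel₀ (ne_of_gt h2'), h2, h2', inv_pos.mpr h2']
      have hts : (1 - 81*b^2/256) * Real.cosh a ≤ Real.sinh a := by
        nlinarith [aux_tanh_lb a, mul_le_mul_of_nonneg_right hE hC.le]
      have htpos : (0:ℝ) ≤ 1 - 81*b^2/256 := by nlinarith [hb2le]
      have hsR : ((1 - 81*b^2/256) * (1 + 3*b^2/8)) * Real.cosh a
          ≤ Real.sinh a * Real.sqrt (b^2+1) := by
        calc ((1 - 81*b^2/256) * (1 + 3*b^2/8)) * Real.cosh a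
            = ((1 - 81*b^2/256) * Real.cosh a) * (1 + 3*b^2/8) := by ring
          _ ≤ Real.sinh a * (1 + 3*b^2/8) :=
              mul_le_mul_of_nonneg_right hts (by positivity)
          _ ≤ Real.sinh a * Real.sqrt (b^2+1) :=
              mul_le_mul_of_nonneg_left hR hs
      have hpoly : b ≤ (b/2 + (b/2)^3/6 - 5*(b/2)^4/192) *
          ((1 - 81*b^2/256) * (1 + 3*b^2/8) + 1) := by
        have h4 : b^4 ≤ b^3 := by nlinarith [pow_nonneg hb.le 3]
        have h5 : b^5 ≤ b^3 := by nlinarith [pow_nonneg hb.le 3, pow_nonneg hb.le 4]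
        have h6 : b^6 ≤ b^3 := by
          nlinarith [pow_nonneg hb.le 3, pow_nonneg hb.le 4, pow_nonneg hb.le 5]
        have h7 : b^7 ≤ b^3 := by
          nlinarith [pow_nonneg hb.le 3, pow_nonneg hb.le 4, pow_nonneg hb.le 5,
            pow_nonneg hb.le 6]
        nlinarith [h4, h5, h6, h7, pow_nonneg hb.le 8]
      have hbrC : ((1 - 81*b^2/256) * (1 + 3*b^2/8) + 1) * Real.cosh a
          ≤ Real.sinh a * Real.sqrt (b^2+1) + Real.cosh a := by nlinarith [hsR]
      have hbrpos : 0 ≤ ((1 - 81*b^2/256) * (1 + 3*b^2/8) + 1) * Real.cosh a := by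
        nlinarith [htpos, hC, mul_nonneg htpos (by positivity : (0:ℝ) ≤ 1 + 3*b^2/8)]
      calc b * Real.cosh a
          ≤ ((b/2 + (b/2)^3/6 - 5*(b/2)^4/192) *
              ((1 - 81*b^2/256) * (1 + 3*b^2/8) + 1)) * Real.cosh a :=
            mul_le_mul_of_nonneg_right hpoly hC.le
        _ = (b/2 + (b/2)^3/6 - 5*(b/2)^4/192) *
              (((1 - 81*b^2/256) * (1 + 3*b^2/8) + 1) * Real.cosh a) := by ring
        _ ≤ Real.sinh (b/2) * (((1 - 81*b^2/256) * (1 + 3*b^2/8) + 1) * Real.cosh a) :=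
            mul_le_mul_of_nonneg_right hσ hbrpos
        _ ≤ Real.sinh (b/2) * (Real.sinh a * Real.sqrt (b^2+1) + Real.cosh a) :=
            mul_le_mul_of_nonneg_left hbrC hSpos.le
theorem hexagon_ratio_bound :
    (∀ (a b e κ g : ℝ), 0 < a → 0 < b → 0 < e →
      Real.sinh e * Real.sinh (b / 2) = Real.cosh a →
      1 < κ → 3 ≤ g → κ * Real.log (2 * g) ≤ a * b →
      a / (a + Real.arsinh (1 / b)) ≤ a / e) ∧
    (∀ ε : ℝ, 0 < ε → ∃ κ₀ : ℝ, ∀ κ : ℝ, κ₀ ≤ κ →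
      ∀ (a b e g : ℝ), 0 < a → 0 < b → 0 < e →
        Real.sinh e * Real.sinh (b / 2) = Real.cosh a →
        1 < κ → 3 ≤ g → κ * Real.log (2 * g) ≤ a * b →
        1 - ε ≤ a / (a + Real.arsinh (1 / b))) := by
  constructor
  · intro a b e κ g ha hb he h hκ hg hab
    have hbinv : 0 < 1/b := by positivity
    have hc : 0 < Real.arsinh (1/b) := Real.arsinh_pos_iff.mpr hbinv
    have hlog6 : (16:ℝ)/9 ≤ Real.log (2*g) :=
      aux_log_six.trans (Real.log_le_log (by norm_num) (by linarith))
    have hL : 16/9 ≤ a * b := by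
      calc (16:ℝ)/9 ≤ Real.log (2*g) := hlog6
        _ ≤ κ * Real.log (2*g) := le_mul_of_one_le_left (by linarith) hκ.le
        _ ≤ a*b := hab
    have hSpos : 0 < Real.sinh (b/2) := Real.sinh_pos_iff.mpr (by linarith)
    have key : e ≤ a + Real.arsinh (1/b) := by
      rw [← Real.sinh_le_sinh, Real.sinh_add, Real.sinh_arsinh, Real.cosh_arsinh]
      have hsqrt : Real.sqrt (1 + (1/b)^2) * b = Real.sqrt (b^2+1) := by
        rw [← Real.sqrt_sq hb.le, ← Real.sqrt_mul (by positivity)]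
        congr 1
        field_simp
        rw [Real.sq_sqrt (by positivity)]
      have hmain := aux_main ha hb hL
      have hsinh_e : Real.sinh e * Real.sinh (b/2) = Real.cosh a := h
      -- goal: sinh e ≤ sinh a * √(1+(1/b)^2) + cosh a * (1/b)
      rw [← mul_le_mul_iff_of_pos_right hSpos, hsinh_e]
      rw [← mul_le_mul_iff_of_pos_right hb]
      have expand : (Real.sinh a * Real.sqrt (1 + (1/b)^2) + Real.cosh a * (1/b)) *
          Real.sinh (b/2) * b
          = Real.sinh (b/2) * (Real.sinh a * (Real.sqrt (1 + (1/b)^2) * b) + Real.cosh a) := by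
        field_simp
      rw [expand, hsqrt]
      calc Real.cosh a * b = b * Real.cosh a := by ring
        _ ≤ Real.sinh (b/2) * (Real.sinh a * Real.sqrt (b^2+1) + Real.cosh a) := hmain
    exact div_le_div_of_nonneg_left ha.le he key
  · intro ε hε
    refine ⟨1/ε, fun κ hκ0 a b e g ha hb he h hκ hg hab => ?_⟩
    have hbinv : 0 < 1/b := by positivity
    have hc : 0 < Real.arsinh (1/b) := Real.arsinh_pos_iff.mpr hbinv
    have hcb : Real.arsinh (1/b) ≤ 1/b := by
      nth_rewrite 2 [← Real.sinh_arsinh (1/b)]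
      exact Real.self_le_sinh_iff.mpr (Real.arsinh_pos_iff.mpr hbinv).le
    have hlog1 : (1:ℝ) ≤ Real.log (2*g) := by
      have := aux_log_six.trans (Real.log_le_log (by norm_num) (by linarith : (6:ℝ) ≤ 2*g))
      linarith
    have habe : 1/ε ≤ a * b := by
      calc 1/ε ≤ κ := hκ0
        _ = κ * 1 := by ring
        _ ≤ κ * Real.log (2*g) := by
            exact mul_le_mul_of_nonneg_left hlog1 (by linarith)
        _ ≤ a*b := hab
    have habpos : 0 < a*b := mul_pos ha hb
    have hinv : 1/(a*b) ≤ ε := by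
      rw [div_le_iff₀ habpos]
      rw [div_le_iff₀ hε] at habe
      nlinarith [habe]
    have hden : 0 < a + Real.arsinh (1/b) := by linarith
    have hfrac : Real.arsinh (1/b) / (a + Real.arsinh (1/b)) ≤ ε := by
      have h1 : Real.arsinh (1/b) / (a + Real.arsinh (1/b)) ≤ Real.arsinh (1/b) / a :=
        div_le_div_of_nonneg_left hc.le ha (by linarith)
      have h2 : Real.arsinh (1/b) / a ≤ (1/b)/a := by gcongr
      have h3 : (1/b)/a = 1/(a*b) := by
        rw [div_div, mul_comm]
      linarith [h3 ▸ h2.trans_eq h3, hinv, h1, h2]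
    have heq : a / (a + Real.arsinh (1/b)) = 1 - Real.arsinh (1/b) / (a + Real.arsinh (1/b)) := by
      field_simp
      ring
    rw [heq]
    linarith [hfrac]
end
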